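/- Let ℓ ≥ 1 and for each i ∈ {1, ..., ℓ} let I_i = {a_i, a_i+b_i, ..., a_i+(m_i−1)b_i} be an m_i-term arithmetic progression of positive integers with gcd(a_i, b_i) = 1, and assume I_i ∩ I_j = ∅ for i ≠ j. Set X = I_1 ∪ ... ∪ I_ℓ and for each positive integer d and each i, let I_{id} = {x ∈ I_i : d ∣ x}. Then for every positive integer k: the number of subsets A of X with |A| = k and gcd(A) = 1 equals Σ_{d=1}^{max X} μ(d)·C(Σ_{i=1}^{ℓ} |I_{id}|, k), and the number of nonempty subsets A of X with gcd(A) = 1 equals Σ_{d=1}^{max X} μ(d)·(2^{Σ_{i=1}^{ℓ} |I_{id}|} − 1); here |I_{id}| = 0 if gcd(d, b_i) ≠ 1, and if gcd(d, b_i) = 1 then |I_{id}| = ⌊m_i/d⌋ + ε_{id}, where ε_{id} = 1 if d ∤ m_i and the residue of −a_i·b_i^{−1} modulo d lies in {0, ..., m_i − 1 − ⌊m_i/d⌋·d} (b_i^{−1} being the multiplicative inverse of b_i modulo d), and ε_{id} = 0 otherwise. -/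

import Mathlib

open Finset

private lemma qlt_iff {q e s r d : ℕ} (hs : s < d) (hr : r < d) :
    q * d + r < e * d + s ↔ q < e + if r < s then 1 else 0 := by
  split_ifs with h
  · constructor
    · intro hlt
      by_contra hq
      push_neg at hq
      have h1 : (e + 1) * d ≤ q * d := Nat.mul_le_mul_right d (by omega)
      have h2 : (e + 1) * d = e * d + d := by ring
      omega
    · intro hq
      have h1 : q * d ≤ e * d := Nat.mul_le_mul_right d (by omega)
      omega
  · push_neg at h
    constructor
    · intro hlt
      by_contra hq
      push_neg at hq
      have h1 : e * d ≤ q * d := Nat.mul_le_mul_right d (by omega)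
      omega
    · intro hq
      have h1 : (q + 1) * d ≤ e * d := Nat.mul_le_mul_right d (by omega)
      have h2 : (q + 1) * d = q * d + d := by ring
      omega

private lemma count_mod (m d r : ℕ) (hd : 0 < d) (hr : r < d) :
    ((Finset.range m).filter (fun t => t % d = r)).card
      = m / d + if r < m % d then 1 else 0 := by
  have key : (Finset.range m).filter (fun t => t % d = r)
      = (Finset.range (m / d + if r < m % d then 1 else 0)).image (fun q => q * d + r) := by
    ext t
    simp only [mem_filter, mem_range, mem_image]
    constructor
    · rintro ⟨htm, hmod⟩
      have h1 : t / d * d + t % d = t := Nat.div_add_mod' t d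
      refine ⟨t / d, ?_, by omega⟩
      have h2 : t / d * d + r < m / d * d + m % d := by
        have h3 : m / d * d + m % d = m := Nat.div_add_mod' m d
        omega
      exact (qlt_iff (Nat.mod_lt _ hd) hr).mp h2
    · rintro ⟨q, hq, rfl⟩
      have h2 : q * d + r < m / d * d + m % d := (qlt_iff (Nat.mod_lt _ hd) hr).mpr hq
      have h3 : m / d * d + m % d = m := Nat.div_add_mod' m d
      refine ⟨by omega, ?_⟩
      rw [Nat.add_comm, Nat.add_mul_mod_self_right, Nat.mod_eq_of_lt hr]
  rw [key, card_image_of_injective, card_range]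
  intro x y hxy
  simp only at hxy
  have : x * d = y * d := by omega
  exact Nat.eq_of_mul_eq_mul_right hd this

private lemma count_ap (d a b m : ℕ) (hd : 0 < d) (hab : Nat.gcd a b = 1) :
    ((Finset.range m).filter (fun t => d ∣ a + t * b)).card =
      if Nat.gcd d b = 1 then
        m / d + (if ¬ (d ∣ m) ∧ ((-(a : ZMod d)) * (b : ZMod d)⁻¹).val ≤ m - 1 - m / d * d
          then 1 else 0)
      else 0 := by
  haveI : NeZero d := ⟨hd.ne'⟩
  by_cases hcd : Nat.gcd d b = 1
  · rw [if_pos hcd]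
    set x : ZMod d := (-(a : ZMod d)) * (b : ZMod d)⁻¹ with hx
    have hbu : IsUnit (b : ZMod d) :=
      (ZMod.isUnit_iff_coprime b d).mpr (Nat.coprime_comm.mp hcd)
    have hequiv : ∀ t : ℕ, (d ∣ a + t * b) ↔ t % d = x.val := by
      intro t
      rw [← ZMod.natCast_eq_zero_iff]
      push_cast
      constructor
      · intro h
        have h1 : (t : ZMod d) * (b : ZMod d) = -(a : ZMod d) := by linear_combination h
        have : (t : ZMod d) = x := by
          rw [hx, ← h1, mul_assoc, ZMod.mul_inv_of_unit _ hbu, mul_one]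
        rw [← ZMod.val_natCast (a := t), this]
      · intro h
        have h1 : (t : ZMod d) = x := by
          apply ZMod.val_injective
          rw [ZMod.val_natCast]; exact h
        have h2 : (t : ZMod d) * (b : ZMod d) = -(a : ZMod d) := by
          rw [h1, hx, mul_assoc, ZMod.inv_mul_of_unit _ hbu, mul_one]
        linear_combination h2
    rw [filter_congr (fun t _ => by rw [hequiv t])]
    rw [count_mod m d x.val hd (ZMod.val_lt x)]
    congr 1
    have h1 : m % d + m / d * d = m := Nat.mod_add_div' m d
    have hslt : m % d < d := Nat.mod_lt _ hd
    have h2 : (d ∣ m) ↔ m % d = 0 := Nat.dvd_iff_mod_eq_zero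
    have hiff : (x.val < m % d) ↔ (¬ (d ∣ m) ∧ x.val ≤ m - 1 - m / d * d) := by
      rw [h2]
      generalize hX : m / d * d = X at h1 ⊢
      generalize hs : m % d = s at h1 hslt ⊢
      omega
    simp only [hiff]
  · rw [if_neg hcd]
    rw [card_eq_zero, filter_eq_empty_iff]
    intro t _ hdvd
    set g := Nat.gcd d b with hg
    have hgb : g ∣ b := Nat.gcd_dvd_right d b
    have hgd : g ∣ d := Nat.gcd_dvd_left d b
    have htb : g ∣ t * b := hgb.mul_left t
    have hsum : g ∣ a + t * b := hgd.trans hdvd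
    have hga : g ∣ a := by
      have := Nat.dvd_sub hsum htb
      rwa [Nat.add_sub_cancel] at this
    exact hcd (Nat.dvd_one.mp (hab ▸ Nat.dvd_gcd hga hgb))

/-- Theorem 4 (parts (iii), (iv)): Let `X = I_1 ∪ … ∪ I_ℓ` where
`I_i = {a_i, a_i+b_i, …, a_i+(m_i−1)b_i}` are pairwise disjoint arithmetic
progressions of positive integers with `gcd(a_i, b_i) = 1`.  Then for every
positive integer `k`,
`f_k(X) = Σ_{d=1}^{max X} μ(d)·C(Σ_{i=1}^ℓ |I_{id}|, k)` and
`f(X) = Σ_{d=1}^{max X} μ(d)·(2^{Σ_{i=1}^ℓ |I_{id}|} − 1)`, where `|I_{id}| = 0`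
if `gcd(d, b_i) ≠ 1` and `|I_{id}| = ⌊m_i/d⌋ + ε_{id}` otherwise. -/
theorem card_relPrime_subsets_union_arith_progs
    (ℓ : ℕ) (hℓ : 1 ≤ ℓ) (a b m : ℕ → ℕ) (I : ℕ → Finset ℕ)
    (ha : ∀ i < ℓ, 0 < a i) (hb : ∀ i < ℓ, 0 < b i) (hm : ∀ i < ℓ, 0 < m i)
    (hcop : ∀ i < ℓ, Nat.gcd (a i) (b i) = 1)
    (hI : ∀ i < ℓ, I i = (Finset.range (m i)).image (fun t => a i + t * b i))
    (hdisj : ∀ i < ℓ, ∀ j < ℓ, i ≠ j → Disjoint (I i) (I j))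
    (hne : ((Finset.range ℓ).biUnion I).Nonempty)
    (k : ℕ) (hk : 0 < k) :
    (((((Finset.range ℓ).biUnion I).powerset.filter
        (fun A => A.card = k ∧ A.gcd id = 1)).card : ℤ) =
      ∑ d ∈ Finset.Icc 1 (((Finset.range ℓ).biUnion I).max' hne),
        ArithmeticFunction.moebius d *
          ((∑ i ∈ Finset.range ℓ,
            (if Nat.gcd d (b i) = 1 then
              m i / d +
                (if ¬ (d ∣ m i) ∧
                    ((-(a i : ZMod d)) * (b i : ZMod d)⁻¹).val ≤ m i - 1 - m i / d * d
                  then 1 else 0)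
              else 0)).choose k : ℤ)) ∧
    (((((Finset.range ℓ).biUnion I).powerset.filter
        (fun A => A.Nonempty ∧ A.gcd id = 1)).card : ℤ) =
      ∑ d ∈ Finset.Icc 1 (((Finset.range ℓ).biUnion I).max' hne),
        ArithmeticFunction.moebius d *
          (2 ^ (∑ i ∈ Finset.range ℓ,
            (if Nat.gcd d (b i) = 1 then
              m i / d +
                (if ¬ (d ∣ m i) ∧
                    ((-(a i : ZMod d)) * (b i : ZMod d)⁻¹).val ≤ m i - 1 - m i / d * d
                  then 1 else 0)
              else 0)) - 1)) := by
  set X := (Finset.range ℓ).biUnion I with hX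
  set M := X.max' hne with hM
  -- positivity of elements
  have hpos : ∀ x ∈ X, 0 < x := by
    intro x hx
    rw [hX] at hx
    simp only [Finset.mem_biUnion, Finset.mem_range] at hx
    obtain ⟨i, hi, hxi⟩ := hx
    rw [hI i hi] at hxi
    simp only [Finset.mem_image, Finset.mem_range] at hxi
    obtain ⟨t, _, rfl⟩ := hxi
    have := ha i hi
    omega
  have hle : ∀ x ∈ X, x ≤ M := fun x hx => Finset.le_max' X x hx
  -- cardinality of X_d
  have hcard : ∀ d ∈ Finset.Icc 1 M,
      (X.filter (fun x => d ∣ x)).card = ∑ i ∈ Finset.range ℓ,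
        (if Nat.gcd d (b i) = 1 then
          m i / d +
            (if ¬ (d ∣ m i) ∧
                ((-(a i : ZMod d)) * (b i : ZMod d)⁻¹).val ≤ m i - 1 - m i / d * d
              then 1 else 0)
          else 0) := by
    intro d hd
    simp only [Finset.mem_Icc] at hd
    rw [hX, Finset.filter_biUnion, Finset.card_biUnion]
    · refine Finset.sum_congr rfl fun i hi => ?_
      simp only [Finset.mem_range] at hi
      have hinj : Function.Injective (fun t => a i + t * b i) := by
        intro x y hxy
        simp only at hxy
        exact Nat.eq_of_mul_eq_mul_right (hb i hi) (by omega)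
      rw [hI i hi, Finset.filter_image, Finset.card_image_of_injective _ hinj]
      exact count_ap d (a i) (b i) (m i) (by omega) (hcop i hi)
    · intro i hi j hj hij
      exact Finset.disjoint_filter_filter
        (hdisj i (Finset.mem_range.mp hi) j (Finset.mem_range.mp hj) hij)
  -- Möbius sum over divisors
  have hmu : ∀ A : Finset ℕ, A ⊆ X → A.Nonempty →
      (∑ d ∈ Finset.Icc 1 M,
        (ArithmeticFunction.moebius d : ℤ) * (if d ∣ A.gcd id then 1 else 0))
        = if A.gcd id = 1 then 1 else 0 := by
    intro A hA hAne
    obtain ⟨x, hxA⟩ := hAne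
    have hgx : A.gcd id ∣ x := Finset.gcd_dvd hxA
    have hxpos : 0 < x := hpos x (hA hxA)
    have hxM : x ≤ M := hle x (hA hxA)
    have hg0 : A.gcd id ≠ 0 := by
      intro h
      rw [h] at hgx
      omega
    have hgM : A.gcd id ≤ M := le_trans (Nat.le_of_dvd hxpos hgx) hxM
    simp only [mul_ite, mul_one, mul_zero]
    rw [← Finset.sum_filter]
    have hset : (Finset.Icc 1 M).filter (fun d => d ∣ A.gcd id) = (A.gcd id).divisors := by
      ext e
      simp only [Finset.mem_filter, Finset.mem_Icc, Nat.mem_divisors]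
      constructor
      · rintro ⟨⟨h1, h2⟩, h3⟩
        exact ⟨h3, hg0⟩
      · rintro ⟨h1, _⟩
        exact ⟨⟨Nat.pos_of_dvd_of_pos h1 (Nat.pos_of_ne_zero hg0),
          le_trans (Nat.le_of_dvd (Nat.pos_of_ne_zero hg0) h1) hgM⟩, h1⟩
    rw [hset, ← ArithmeticFunction.coe_mul_zeta_apply,
      ArithmeticFunction.moebius_mul_coe_zeta, ArithmeticFunction.one_apply]
  -- binomial count
  have hchoose : ∀ d ∈ Finset.Icc 1 M,
      (((X.filter (fun x => d ∣ x)).card.choose k : ℤ))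
        = ∑ A ∈ X.powerset, (if A.card = k ∧ d ∣ A.gcd id then (1:ℤ) else 0) := by
    intro d hd
    have hset : X.powerset.filter (fun A => A.card = k ∧ d ∣ A.gcd id)
        = Finset.powersetCard k (X.filter (fun x => d ∣ x)) := by
      ext A
      simp only [Finset.mem_filter, Finset.mem_powerset, Finset.mem_powersetCard,
        Finset.subset_iff, Finset.mem_filter]
      constructor
      · rintro ⟨hsub, hcardA, hdvd⟩
        exact ⟨fun x hx => ⟨hsub hx, hdvd.trans (Finset.gcd_dvd hx)⟩, hcardA⟩
      · rintro ⟨hsub, hcardA⟩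
        exact ⟨fun x hx => (hsub hx).1, hcardA, Finset.dvd_gcd fun x hx => (hsub hx).2⟩
    rw [← Finset.card_powersetCard, ← hset, Finset.card_filter, Nat.cast_sum]
    exact Finset.sum_congr rfl fun A _ => by split_ifs <;> simp
  -- power count
  have hpow : ∀ d ∈ Finset.Icc 1 M,
      ((2:ℤ) ^ ((X.filter (fun x => d ∣ x)).card) - 1)
        = ∑ A ∈ X.powerset, (if A.Nonempty ∧ d ∣ A.gcd id then (1:ℤ) else 0) := by
    intro d hd
    have hset : X.powerset.filter (fun A => A.Nonempty ∧ d ∣ A.gcd id)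
        = ((X.filter (fun x => d ∣ x)).powerset).erase ∅ := by
      ext A
      simp only [Finset.mem_filter, Finset.mem_powerset, Finset.mem_erase,
        Finset.subset_iff, Finset.mem_filter]
      constructor
      · rintro ⟨hsub, hAne, hdvd⟩
        exact ⟨Finset.nonempty_iff_ne_empty.mp hAne,
          fun x hx => ⟨hsub hx, hdvd.trans (Finset.gcd_dvd hx)⟩⟩
      · rintro ⟨hAne, hsub⟩
        have hAne' : A.Nonempty := Finset.nonempty_iff_ne_empty.mpr hAne
        exact ⟨fun x hx => (hsub hx).1, hAne', Finset.dvd_gcd fun x hx => (hsub hx).2⟩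
    have hcarderase : (((X.filter (fun x => d ∣ x)).powerset).erase ∅).card
        = 2 ^ ((X.filter (fun x => d ∣ x)).card) - 1 := by
      rw [Finset.card_erase_of_mem (Finset.empty_mem_powerset _), Finset.card_powerset]
    have h1 : (1:ℕ) ≤ 2 ^ ((X.filter (fun x => d ∣ x)).card) := Nat.one_le_two_pow
    calc ((2:ℤ) ^ ((X.filter (fun x => d ∣ x)).card) - 1)
        = (((2 ^ ((X.filter (fun x => d ∣ x)).card) - 1 : ℕ) : ℤ)) := by
          push_cast [Nat.cast_sub h1]; ring
      _ = ((((X.filter (fun x => d ∣ x)).powerset).erase ∅).card : ℤ) := by rw [hcarderase]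
      _ = ((X.powerset.filter (fun A => A.Nonempty ∧ d ∣ A.gcd id)).card : ℤ) := by rw [hset]
      _ = ∑ A ∈ X.powerset, (if A.Nonempty ∧ d ∣ A.gcd id then (1:ℤ) else 0) := by
          rw [Finset.card_filter, Nat.cast_sum]
          exact Finset.sum_congr rfl fun A _ => by split_ifs <;> simp
  constructor
  · -- part (iii)
    have cast1 : ((X.powerset.filter (fun A => A.card = k ∧ A.gcd id = 1)).card : ℤ)
        = ∑ A ∈ X.powerset, (if A.card = k ∧ A.gcd id = 1 then (1:ℤ) else 0) := by
      rw [Finset.card_filter, Nat.cast_sum]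
      exact Finset.sum_congr rfl fun A _ => by split_ifs <;> simp
    rw [cast1]
    calc ∑ A ∈ X.powerset, (if A.card = k ∧ A.gcd id = 1 then (1:ℤ) else 0)
        = ∑ A ∈ X.powerset, ∑ d ∈ Finset.Icc 1 M,
            (ArithmeticFunction.moebius d : ℤ) *
              (if A.card = k ∧ d ∣ A.gcd id then 1 else 0) := by
          refine Finset.sum_congr rfl fun A hA => ?_
          by_cases hAk : A.card = k
          · simp only [hAk, true_and]
            exact (hmu A (Finset.mem_powerset.mp hA)
              (Finset.card_pos.mp (hAk ▸ hk))).symm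
          · simp [hAk]
      _ = ∑ d ∈ Finset.Icc 1 M, ∑ A ∈ X.powerset,
            (ArithmeticFunction.moebius d : ℤ) *
              (if A.card = k ∧ d ∣ A.gcd id then 1 else 0) := Finset.sum_comm
      _ = _ := by
          refine Finset.sum_congr rfl fun d hd => ?_
          rw [← Finset.mul_sum, ← hchoose d hd, hcard d hd]
  · -- part (iv)
    have cast2 : ((X.powerset.filter (fun A => A.Nonempty ∧ A.gcd id = 1)).card : ℤ)
        = ∑ A ∈ X.powerset, (if A.Nonempty ∧ A.gcd id = 1 then (1:ℤ) else 0) := by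
      rw [Finset.card_filter, Nat.cast_sum]
      exact Finset.sum_congr rfl fun A _ => by split_ifs <;> simp
    rw [cast2]
    calc ∑ A ∈ X.powerset, (if A.Nonempty ∧ A.gcd id = 1 then (1:ℤ) else 0)
        = ∑ A ∈ X.powerset, ∑ d ∈ Finset.Icc 1 M,
            (ArithmeticFunction.moebius d : ℤ) *
              (if A.Nonempty ∧ d ∣ A.gcd id then 1 else 0) := by
          refine Finset.sum_congr rfl fun A hA => ?_
          by_cases hAne : A.Nonempty
          · simp only [hAne, true_and]
            exact (hmu A (Finset.mem_powerset.mp hA) hAne).symm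
          · simp [hAne]
      _ = ∑ d ∈ Finset.Icc 1 M, ∑ A ∈ X.powerset,
            (ArithmeticFunction.moebius d : ℤ) *
              (if A.Nonempty ∧ d ∣ A.gcd id then 1 else 0) := Finset.sum_comm
      _ = _ := by
          refine Finset.sum_congr rfl fun d hd => ?_
          rw [← Finset.mul_sum, ← hpow d hd, hcard d hd]
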